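/- Let A be a complex unital Banach algebra and a ∈ A. Suppose there exists an idempotent p ∈ A such that ap = pa, a + p is left invertible and ap is quasi-nilpotent. Then for every complex λ with 0 < |λ| < ‖s‖^{-1}, where s is any fixed left inverse of a + p, the element λ − a is left invertible; consequently, if 0 ∈ σ_l(a) then 0 is an isolated point of the left spectrum σ_l(a). The dual statement holds for right invertibility and the right spectrum σ_r(a). -/

import Mathlib

open Filter Topology

/-- `q` is quasi-nilpotent: `‖qⁿ‖^{1/n} → 0`. -/
def IsQuasinilpotentElem {A : Type*} [NormedRing A] (q : A) : Prop :=
  Tendsto (fun n : ℕ => ‖q ^ n‖ ^ ((1 : ℝ) / n)) atTop (𝓝 0)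

private lemma quasi_spectralRadius_zero {A : Type*} [NormedRing A] [NormedAlgebra ℂ A]
    [CompleteSpace A] {q : A} (hq : IsQuasinilpotentElem q) : spectralRadius ℂ q = 0 := by
  have h1 : Tendsto (fun n : ℕ => ENNReal.ofReal (‖q ^ n‖ ^ ((1 : ℝ) / n))) atTop (𝓝 0) := by
    have := (ENNReal.continuous_ofReal.tendsto 0).comp hq
    simpa [Function.comp_def] using this
  exact tendsto_nhds_unique
    (spectrum.pow_norm_pow_one_div_tendsto_nhds_spectralRadius q) h1

private lemma quasi_isUnit {A : Type*} [NormedRing A] [NormedAlgebra ℂ A]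
    [CompleteSpace A] {q : A} (hq : IsQuasinilpotentElem q) {z : ℂ} (hz : 0 < ‖z‖) :
    IsUnit (z • (1 : A) - q) := by
  have hlt : spectralRadius ℂ q < ‖z‖₊ := by
    rw [quasi_spectralRadius_zero hq]
    have hz0 : z ≠ 0 := by simpa using hz.ne'
    exact_mod_cast ENNReal.coe_pos.mpr (nnnorm_pos.mpr hz0)
  have hres := spectrum.mem_resolventSet_of_spectralRadius_lt hlt
  rw [spectrum.mem_resolventSet_iff, Algebra.algebraMap_eq_smul_one] at hres
  exact hres

private lemma left_aux {A : Type*} [NormedRing A] [NormedAlgebra ℂ A] [CompleteSpace A]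
    (a p : A) (hp : p * p = p) (hc : a * p = p * a) (hq : IsQuasinilpotentElem (a * p))
    (s : A) (hs : s * (a + p) = 1) (z : ℂ) (hz : 0 < ‖z‖) (hzs : ‖z‖ < ‖s‖⁻¹) :
    ∃ x : A, x * (z • (1 : A) - a) = 1 := by
  -- the invertible "core": u = z•1 - a*p
  set u : A := z • (1 : A) - a * p with hu_def
  have hu : IsUnit u := quasi_isUnit hq hz
  set b : A := z • (1 : A) - a with hb_def
  -- commutation facts
  have hpu : Commute p u := by
    have : p * (a * p) = (a * p) * p := by
      rw [← mul_assoc, ← hc, mul_assoc, hp]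
    simp only [Commute, SemiconjBy, hu_def, mul_sub, sub_mul, smul_mul_assoc,
      mul_smul_comm, mul_one, one_mul, this]
  have hpw : Commute p (↑hu.unit⁻¹ : A) := hpu.units_inv_right
  set w : A := (↑hu.unit⁻¹ : A) with hw_def
  have hwu : w * u = 1 := by
    simpa [hw_def] using hu.unit.inv_mul
  -- b * p = u * p
  have hbp_up : b * p = u * p := by
    simp only [hb_def, hu_def, sub_mul, smul_mul_assoc, one_mul, mul_assoc, hp]
  -- p * b = b * p
  have hpb : p * b = b * p := by
    simp only [hb_def, mul_sub, sub_mul, mul_smul_comm, smul_mul_assoc, mul_one, one_mul, hc]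
  -- w * (b * p) = p
  have hwbp : w * (b * p) = p := by
    rw [hbp_up, ← mul_assoc, hwu, one_mul]
  -- the left inverse t of (z•1 - (a+p))
  have hzs1 : ‖z • s‖ < 1 := by
    rw [norm_smul]
    rcases eq_or_lt_of_le (norm_nonneg s) with h0 | h0
    · rw [← h0, mul_zero]; exact one_pos
    · calc ‖z‖ * ‖s‖ < ‖s‖⁻¹ * ‖s‖ := by exact mul_lt_mul_of_pos_right hzs h0
        _ = 1 := inv_mul_cancel₀ (ne_of_gt h0)
  have hr : IsUnit (1 - z • s) := isUnit_one_sub_of_norm_lt_one hzs1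
  set rinv : A := (↑hr.unit⁻¹ : A) with hrinv_def
  have hrr : rinv * (1 - z • s) = 1 := by simpa [hrinv_def] using hr.unit.inv_mul
  set t : A := -(rinv * s) with ht_def
  have ht : t * (z • (1 : A) - (a + p)) = 1 := by
    have h1 : s * (z • (1 : A) - (a + p)) = z • s - 1 := by
      rw [mul_sub, hs, mul_smul_comm, mul_one]
    rw [ht_def, neg_mul, mul_assoc, h1, ← neg_sub, mul_neg, neg_neg, hrr]
  -- b * (1 - p) = (z•1 - (a+p)) * (1 - p)
  have hb1p : b * (1 - p) = (z • (1 : A) - (a + p)) * (1 - p) := by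
    simp only [hb_def, sub_mul, add_mul, mul_sub, mul_one, smul_mul_assoc, one_mul, hp]
    abel
  -- Step A : (w*p + (1-p)) * b = p + b * (1-p)
  have stepA : (w * p + (1 - p)) * b = p + b * (1 - p) := by
    have h1 : (w * p) * b = p := by
      rw [mul_assoc, hpb]
      exact hwbp
    have h2 : (1 - p) * b = b * (1 - p) := by
      simp only [sub_mul, mul_sub, one_mul, mul_one, hpb]
    rw [add_mul, h1, h2]
  -- Step B : (p + (1-p)*t*(1-p)) * (p + b*(1-p)) = 1
  have stepB : (p + (1 - p) * t * (1 - p)) * (p + b * (1 - p)) = 1 := by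
    have hpv : p * (p + b * (1 - p)) = p := by
      rw [mul_add, hp, ← mul_assoc, hpb, mul_assoc]
      have : p * (1 - p) = 0 := by rw [mul_sub, mul_one, hp, sub_self]
      rw [this, mul_zero, add_zero]
    have h1pp : (1 - p) * p = 0 := by rw [sub_mul, one_mul, hp, sub_self]
    have h1p1p : (1 - p) * (1 - p) = 1 - p := by
      rw [mul_sub, mul_one, h1pp, sub_zero]
    have hqv : ((1 - p) * t * (1 - p)) * (p + b * (1 - p)) = 1 - p := by
      rw [mul_add]
      rw [mul_assoc ((1 - p) * t) (1 - p) p, h1pp, mul_zero, zero_add]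
      calc (1 - p) * t * (1 - p) * (b * (1 - p))
          = (1 - p) * t * ((1 - p) * b * (1 - p)) := by
            rw [mul_assoc ((1 - p) * t) (1 - p) (b * (1 - p)), mul_assoc (1 - p) b (1 - p)]
        _ = (1 - p) * t * (b * (1 - p)) := by
            have : (1 - p) * b = b * (1 - p) := by
              simp only [sub_mul, mul_sub, one_mul, mul_one, hpb]
            rw [this, mul_assoc b (1-p) (1-p), h1p1p]
        _ = (1 - p) * (t * (z • (1 : A) - (a + p)) * (1 - p)) := by
            rw [hb1p, mul_assoc, mul_assoc]
        _ = 1 - p := by rw [ht, one_mul, h1p1p]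
    rw [add_mul, hpv, hqv, add_sub_cancel]
  refine ⟨(p + (1 - p) * t * (1 - p)) * (w * p + (1 - p)), ?_⟩
  rw [mul_assoc, stepA, stepB]

private lemma left_main {A : Type*} [NormedRing A] [NormedAlgebra ℂ A] [CompleteSpace A]
    (a p : A) (hp : p * p = p) (hc : a * p = p * a) (hq : IsQuasinilpotentElem (a * p))
    (s : A) (hs : s * (a + p) = 1) :
    (∀ z : ℂ, 0 < ‖z‖ → ‖z‖ < ‖s‖⁻¹ → ∃ x : A, x * (z • (1 : A) - a) = 1) ∧
      ((¬ ∃ x : A, x * a = 1) →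
        ∃ ε > (0 : ℝ), ∀ z : ℂ, z ≠ 0 → ‖z‖ < ε → ∃ x : A, x * (z • (1 : A) - a) = 1) := by
  constructor
  · intro z hz hzs
    exact left_aux a p hp hc hq s hs z hz hzs
  · intro hna
    have hs0 : s ≠ 0 := by
      rintro rfl
      rw [zero_mul] at hs
      exact hna ⟨0, by rw [zero_mul, hs]⟩
    refine ⟨‖s‖⁻¹, inv_pos.mpr (norm_pos_iff.mpr hs0), fun z hz hzs => ?_⟩
    exact left_aux a p hp hc hq s hs z (norm_pos_iff.mpr hz) hzs

theorem isolated_zero_of_left_right_spectral_idempotent {A : Type*} [NormedRing A]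
    [NormedAlgebra ℂ A] [CompleteSpace A] (a p : A)
    (hp : p * p = p) (hc : a * p = p * a) (hq : IsQuasinilpotentElem (a * p)) :
    (∀ s : A, s * (a + p) = 1 →
      (∀ z : ℂ, 0 < ‖z‖ → ‖z‖ < ‖s‖⁻¹ → ∃ x : A, x * (z • (1 : A) - a) = 1) ∧
      ((¬ ∃ x : A, x * a = 1) →
        ∃ ε > (0 : ℝ), ∀ z : ℂ, z ≠ 0 → ‖z‖ < ε → ∃ x : A, x * (z • (1 : A) - a) = 1)) ∧
    (∀ s : A, (a + p) * s = 1 →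
      (∀ z : ℂ, 0 < ‖z‖ → ‖z‖ < ‖s‖⁻¹ → ∃ x : A, (z • (1 : A) - a) * x = 1) ∧
      ((¬ ∃ x : A, a * x = 1) →
        ∃ ε > (0 : ℝ), ∀ z : ℂ, z ≠ 0 → ‖z‖ < ε → ∃ x : A, (z • (1 : A) - a) * x = 1)) := by
  constructor
  · intro s hs
    exact left_main a p hp hc hq s hs
  · intro s hs
    -- pass to the opposite algebra
    open MulOpposite in
    have hp' : (op p) * (op p) = op p := by rw [← op_mul, hp]
    have hc' : (op a) * (op p) = (op p) * (op a) := by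
      rw [← op_mul, ← op_mul, hc]
    have hq' : IsQuasinilpotentElem ((op a) * (op p)) := by
      have heq : ∀ n : ℕ, ‖((op a) * (op p)) ^ n‖ = ‖(a * p) ^ n‖ := by
        intro n
        rw [← op_mul, ← hc, ← op_pow, norm_op]
      unfold IsQuasinilpotentElem
      simpa only [heq, IsQuasinilpotentElem] using hq
    have hs' : (op s) * ((op a) + (op p)) = 1 := by
      rw [← op_add, ← op_mul, hs, op_one]
    have H := left_main (op a) (op p) hp' hc' hq' (op s) hs'
    rw [norm_op] at H
    constructor
    · intro z hz hzs
      obtain ⟨x, hx⟩ := H.1 z hz hzs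
      refine ⟨unop x, ?_⟩
      have : x * (z • (1 : Aᵐᵒᵖ) - op a) = op ((z • (1 : A) - a) * unop x) := by
        rw [op_mul, op_sub, op_smul, op_one, op_unop]
      rw [this] at hx
      exact op_injective (by rw [hx, op_one])
    · intro hna
      have hna' : ¬ ∃ x : Aᵐᵒᵖ, x * op a = 1 := by
        rintro ⟨x, hx⟩
        refine hna ⟨unop x, ?_⟩
        have : x * op a = op (a * unop x) := by rw [op_mul, op_unop]
        rw [this] at hx
        exact op_injective (by rw [hx, op_one])
      obtain ⟨ε, hε, hE⟩ := H.2 hna'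
      refine ⟨ε, hε, fun z hz hzs => ?_⟩
      obtain ⟨x, hx⟩ := hE z hz hzs
      refine ⟨unop x, ?_⟩
      have : x * (z • (1 : Aᵐᵒᵖ) - op a) = op ((z • (1 : A) - a) * unop x) := by
        rw [op_mul, op_sub, op_smul, op_one, op_unop]
      rw [this] at hx
      exact op_injective (by rw [hx, op_one])
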